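/- Let A₀, A₁, B₀, B₁ be self-adjoint operators with A₀² = A₁² = B₀² = B₁² = 1 and [Aₓ,B_y] = 0, α ≥ 1, β real, η = √((4+β²)(1+α²)), Δ = 2(α²−1)√((β²+4)/(α²+1)). Then η·1 − B_{[α,β]} = (α²/(Δ+2η))·{((α²−1)/α²)[(−(ηα/(α²+1))A₀ + B₀+B₁)² + (−βA₀ + (η/(α²+1))·1 − A₁(B₀−B₁))²] + (2A₀ − (η/(2α))(B₀+B₁) + (β/2)S₁)² + (1/α²)(2A₁ − (η/2)(B₀−B₁) + (β/2)S₂)²}, where S₁ = (1/α)A₀(B₀+B₁) − A₁(B₀−B₁) and S₂ = A₀(B₀−B₁) − αA₁(B₀+B₁). -/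

import Mathlib

open ContinuousLinearMap

set_option maxHeartbeats 4000000 in
theorem key_lemma {H : Type*} [NormedAddCommGroup H] [InnerProductSpace ℂ H] [CompleteSpace H]
    (A₀ A₁ B₀ B₁ : H →L[ℂ] H)
    (hA₀2 : A₀ * A₀ = 1) (hA₁2 : A₁ * A₁ = 1) (hB₀2 : B₀ * B₀ = 1) (hB₁2 : B₁ * B₁ = 1)
    (hc00 : A₀ * B₀ = B₀ * A₀) (hc01 : A₀ * B₁ = B₁ * A₀)
    (hc10 : A₁ * B₀ = B₀ * A₁) (hc11 : A₁ * B₁ = B₁ * A₁)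
    (a b e : ℂ) (he2 : e^2 = (4 + b^2) * (1 + a^2)) :
    (64*e^2*a^2*(a^2+1)) • (1 : H →L[ℂ] H)
      - (64*e*a^2*(a^2+1)) • (b • A₀ + a • (A₀ * B₀) + a • (A₀ * B₁) + A₁ * B₀ - A₁ * B₁) =
    (16*(a^2-1)) • (((-(e*a)) • A₀ + (a^2+1) • B₀ + (a^2+1) • B₁)^2
        + ((-(b*(a^2+1))) • A₀ + e • (1 : H →L[ℂ] H) - (a^2+1) • (A₁ * (B₀ - B₁)))^2)
      + ((a^2+1)^2) • ((8*a) • A₀ - (2*e) • (B₀ + B₁) + (2*b) • (A₀ * (B₀ + B₁))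
          - (2*a*b) • (A₁ * (B₀ - B₁)))^2
      + (4*(a^2+1)^2) • ((4:ℂ) • A₁ - e • (B₀ - B₁) + b • (A₀ * (B₀ - B₁))
          - (a*b) • (A₁ * (B₀ + B₁)))^2 := by
  have s00 : ∀ X : H →L[ℂ] H, B₀ * (A₀ * X) = A₀ * (B₀ * X) := by
    intro X; rw [← mul_assoc, ← hc00, mul_assoc]
  have s01 : ∀ X : H →L[ℂ] H, B₁ * (A₀ * X) = A₀ * (B₁ * X) := by
    intro X; rw [← mul_assoc, ← hc01, mul_assoc]
  have s10 : ∀ X : H →L[ℂ] H, B₀ * (A₁ * X) = A₁ * (B₀ * X) := by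
    intro X; rw [← mul_assoc, ← hc10, mul_assoc]
  have s11 : ∀ X : H →L[ℂ] H, B₁ * (A₁ * X) = A₁ * (B₁ * X) := by
    intro X; rw [← mul_assoc, ← hc11, mul_assoc]
  have q0 : ∀ X : H →L[ℂ] H, A₀ * (A₀ * X) = X := by
    intro X; rw [← mul_assoc, hA₀2, one_mul]
  have q1 : ∀ X : H →L[ℂ] H, A₁ * (A₁ * X) = X := by
    intro X; rw [← mul_assoc, hA₁2, one_mul]
  have r0 : ∀ X : H →L[ℂ] H, B₀ * (B₀ * X) = X := by
    intro X; rw [← mul_assoc, hB₀2, one_mul]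
  have r1 : ∀ X : H →L[ℂ] H, B₁ * (B₁ * X) = X := by
    intro X; rw [← mul_assoc, hB₁2, one_mul]
  simp only [pow_two, mul_add, add_mul, mul_sub, sub_mul, smul_mul_assoc, mul_smul_comm,
    smul_smul, smul_add, smul_sub, mul_one, one_mul, mul_assoc,
    hc00.symm, hc01.symm, hc10.symm, hc11.symm, s00, s01, s10, s11,
    hA₀2, hA₁2, hB₀2, hB₁2, q0, q1, r0, r1]
  match_scalars
  all_goals try ring
  all_goals linear_combination (32*a^2*(1+a^2)) * he2

set_option maxHeartbeats 4000000 in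
theorem stmt_6 {H : Type*} [NormedAddCommGroup H] [InnerProductSpace ℂ H] [CompleteSpace H]
    (A₀ A₁ B₀ B₁ : H →L[ℂ] H)
    (hA₀ : IsSelfAdjoint A₀) (hA₁ : IsSelfAdjoint A₁)
    (hB₀ : IsSelfAdjoint B₀) (hB₁ : IsSelfAdjoint B₁)
    (hA₀2 : A₀ * A₀ = 1) (hA₁2 : A₁ * A₁ = 1) (hB₀2 : B₀ * B₀ = 1) (hB₁2 : B₁ * B₁ = 1)
    (hc00 : A₀ * B₀ = B₀ * A₀) (hc01 : A₀ * B₁ = B₁ * A₀)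
    (hc10 : A₁ * B₀ = B₀ * A₁) (hc11 : A₁ * B₁ = B₁ * A₁)
    (α β η Δ : ℝ) (hα : 1 ≤ α)
    (hη : η = Real.sqrt ((4 + β ^ 2) * (1 + α ^ 2)))
    (hΔ : Δ = 2 * (α ^ 2 - 1) * Real.sqrt ((β ^ 2 + 4) / (α ^ 2 + 1)))
    (B S₁ S₂ : H →L[ℂ] H)
    (hB : B = (β : ℂ) • A₀ + (α : ℂ) • (A₀ * B₀) + (α : ℂ) • (A₀ * B₁) + A₁ * B₀ - A₁ * B₁)
    (hS₁ : S₁ = (α⁻¹ : ℂ) • (A₀ * (B₀ + B₁)) - A₁ * (B₀ - B₁))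
    (hS₂ : S₂ = A₀ * (B₀ - B₁) - (α : ℂ) • (A₁ * (B₀ + B₁))) :
    (η : ℂ) • (1 : H →L[ℂ] H) - B =
      ((α ^ 2 / (Δ + 2 * η) : ℝ) : ℂ) •
        (((α ^ 2 - 1) / α ^ 2 : ℝ) •
            (((-(η * α / (α ^ 2 + 1) : ℝ) : ℂ) • A₀ + B₀ + B₁) ^ 2 +
              (((-β : ℝ) : ℂ) • A₀ + ((η / (α ^ 2 + 1) : ℝ) : ℂ) • (1 : H →L[ℂ] H) -
                A₁ * (B₀ - B₁)) ^ 2) +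
          ((2 : ℂ) • A₀ - ((η / (2 * α) : ℝ) : ℂ) • (B₀ + B₁) +
            ((β / 2 : ℝ) : ℂ) • S₁) ^ 2 +
          ((α ^ 2 : ℝ)⁻¹ : ℂ) • ((2 : ℂ) • A₁ - ((η / 2 : ℝ) : ℂ) • (B₀ - B₁) +
            ((β / 2 : ℝ) : ℂ) • S₂) ^ 2) := by
  subst hB hS₁ hS₂
  have hαpos : (0:ℝ) < α := lt_of_lt_of_le one_pos hα
  have hKpos : (0:ℝ) < (4 + β ^ 2) * (1 + α ^ 2) := by positivity
  have hηpos : 0 < η := hη ▸ Real.sqrt_pos.mpr hKpos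
  have hη2R : η ^ 2 = (4 + β ^ 2) * (1 + α ^ 2) := by rw [hη]; exact Real.sq_sqrt hKpos.le
  have hcoefR : α ^ 2 / (Δ + 2 * η) = (α ^ 2 + 1) / (4 * η) := by
    have hs : Real.sqrt ((β ^ 2 + 4) / (α ^ 2 + 1)) = η / (α ^ 2 + 1) := by
      rw [hη, show (β ^ 2 + 4) / (α ^ 2 + 1) = ((4 + β ^ 2) * (1 + α ^ 2)) / (α ^ 2 + 1)^2 by
        field_simp; ring, Real.sqrt_div (by positivity), Real.sqrt_sq (by positivity)]
    have hΔ' : Δ + 2 * η = 4 * η * α ^ 2 / (α ^ 2 + 1) := by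
      rw [hΔ, hs]; field_simp; ring
    rw [hΔ']
    have h1 : (0:ℝ) < α ^ 2 + 1 := by positivity
    field_simp
  have haC : (α:ℂ) ≠ 0 := by exact_mod_cast hαpos.ne'
  have heC : (η:ℂ) ≠ 0 := by exact_mod_cast hηpos.ne'
  have h1aC : ((α:ℂ)^2 + 1) ≠ 0 := by
    have h : ((α:ℝ)^2 + 1) ≠ 0 := by positivity
    exact_mod_cast h
  have he2C : (η:ℂ)^2 = (4 + (β:ℂ)^2) * (1 + (α:ℂ)^2) := by exact_mod_cast hη2R
  have hcoefC : ((α ^ 2 / (Δ + 2 * η) : ℝ) : ℂ) = ((α:ℂ)^2 + 1) / (4 * (η:ℂ)) := by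
    rw [hcoefR]; push_cast; ring
  rw [hcoefC]
  push_cast
  have key := key_lemma A₀ A₁ B₀ B₁ hA₀2 hA₁2 hB₀2 hB₁2 hc00 hc01 hc10 hc11
    (α:ℂ) (β:ℂ) (η:ℂ) he2C
  have hsq1 : (-((η:ℂ) * (α:ℂ) / ((α:ℂ) ^ 2 + 1)) • A₀ + B₀ + B₁) ^ 2
      = ((((α:ℂ)^2+1))⁻¹)^2 • (((-((η:ℂ)*(α:ℂ))) • A₀ + ((α:ℂ)^2+1) • B₀ + ((α:ℂ)^2+1) • B₁)^2) := by
    rw [← smul_pow]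
    congr 1
    match_scalars <;> (try field_simp) <;> (try ring)
  have hsq2 : ((-(β:ℂ)) • A₀ + ((η:ℂ) / ((α:ℂ) ^ 2 + 1)) • (1 : H →L[ℂ] H) - A₁ * (B₀ - B₁)) ^ 2
      = ((((α:ℂ)^2+1))⁻¹)^2 • (((-((β:ℂ)*((α:ℂ)^2+1))) • A₀ + (η:ℂ) • (1 : H →L[ℂ] H)
          - ((α:ℂ)^2+1) • (A₁ * (B₀ - B₁)))^2) := by
    rw [← smul_pow]
    congr 1
    match_scalars <;> (try field_simp) <;> (try ring)
  have hsq3 : ((2:ℂ) • A₀ - ((η:ℂ) / (2 * (α:ℂ))) • (B₀ + B₁)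
        + ((β:ℂ) / 2) • (((α:ℂ))⁻¹ • (A₀ * (B₀ + B₁)) - A₁ * (B₀ - B₁))) ^ 2
      = ((4*(α:ℂ))⁻¹)^2 • (((8*(α:ℂ)) • A₀ - (2*(η:ℂ)) • (B₀ + B₁) + (2*(β:ℂ)) • (A₀ * (B₀ + B₁))
          - (2*(α:ℂ)*(β:ℂ)) • (A₁ * (B₀ - B₁)))^2) := by
    rw [← smul_pow]
    congr 1
    match_scalars <;> (try field_simp) <;> (try ring)
  have hsq4 : ((2:ℂ) • A₁ - ((η:ℂ) / 2) • (B₀ - B₁)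
        + ((β:ℂ) / 2) • (A₀ * (B₀ - B₁) - (α:ℂ) • (A₁ * (B₀ + B₁)))) ^ 2
      = ((2:ℂ)⁻¹)^2 • (((4:ℂ) • A₁ - (η:ℂ) • (B₀ - B₁) + (β:ℂ) • (A₀ * (B₀ - B₁))
          - ((α:ℂ)*(β:ℂ)) • (A₁ * (B₀ + B₁)))^2) := by
    rw [← smul_pow]
    congr 1
    match_scalars <;> (try field_simp) <;> (try ring)
  rw [hsq1, hsq2, hsq3, hsq4]
  have step1 : (η:ℂ) • (1 : H →L[ℂ] H)
        - ((β:ℂ) • A₀ + (α:ℂ) • (A₀ * B₀) + (α:ℂ) • (A₀ * B₁) + A₁ * B₀ - A₁ * B₁)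
      = (64*(η:ℂ)*(α:ℂ)^2*((α:ℂ)^2+1))⁻¹ •
        ((64*(η:ℂ)^2*(α:ℂ)^2*((α:ℂ)^2+1)) • (1 : H →L[ℂ] H)
          - (64*(η:ℂ)*(α:ℂ)^2*((α:ℂ)^2+1)) • ((β:ℂ) • A₀ + (α:ℂ) • (A₀ * B₀)
              + (α:ℂ) • (A₀ * B₁) + A₁ * B₀ - A₁ * B₁)) := by
    match_scalars <;> (try field_simp) <;> (try ring)
  rw [step1, key]
  match_scalars <;> (try field_simp) <;> (try ring)
  all_goals (have hinv : (α:ℂ)^2 * (α:ℂ)⁻¹^2 = 1 := by rw [← mul_pow, mul_inv_cancel₀ haC, one_pow]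
             linear_combination (64 - 64*(α:ℂ)^2) * hinv)
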